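/- Let Ĝ be a finite game with cost functions Ĵ_i and let â* be a pure-strategy Nash equilibrium of Ĝ with robustness margin μ(â*) = (1/2)·min_i min_{b_i ≠ â_i*} (Ĵ_i(b_i, â_{-i}*) − Ĵ_i(â*)). Then for every ε > 0, there exist perturbations ΔJ_i : A → ℝ with max_i max_a |ΔJ_i(a)| = μ(â*) + ε such that â* is not a pure-strategy Nash equilibrium of the game with costs J_i = Ĵ_i + ΔJ_i. Hence μ(â*) is the supremum of perturbation magnitudes preserving the equilibrium. -/
import Mathlib


/-- the robustness margin is tight: for every ε > 0 there is a
perturbation of sup-norm exactly μ(â*) + ε destroying the equilibrium. -/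
theorem robustness_margin_tight
    {N : Type} [Fintype N] [Nonempty N] [DecidableEq N]
    (A : N → Type) [∀ i, Fintype (A i)] [∀ i, DecidableEq (A i)] [∀ i, Nonempty (A i)]
    (hcard : ∀ i, 2 ≤ Fintype.card (A i))
    (Jhat : N → (∀ i, A i) → ℝ)
    (astar : ∀ i, A i)
    (hNE : ∀ (i : N) (b : A i), Jhat i astar ≤ Jhat i (Function.update astar i b))
    (μ : ℝ)
    (hμ : μ = (1 / 2) * Finset.univ.inf' Finset.univ_nonempty (fun i =>
      (Finset.univ.filter (fun b : A i => b ≠ astar i)).inf'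
        (by
          obtain ⟨b, hb⟩ := Fintype.exists_ne_of_one_lt_card (hcard i) (astar i)
          exact ⟨b, Finset.mem_filter.mpr ⟨Finset.mem_univ b, hb⟩⟩)
        (fun b => Jhat i (Function.update astar i b) - Jhat i astar))) :
    ∀ ε : ℝ, 0 < ε →
      ∃ ΔJ : N → (∀ i, A i) → ℝ,
        (Finset.univ.sup' Finset.univ_nonempty (fun i =>
          Finset.univ.sup' Finset.univ_nonempty (fun a : ∀ i, A i => |ΔJ i a|))
            = μ + ε) ∧
        ¬ (∀ (i : N) (b : A i),
            Jhat i astar + ΔJ i astar ≤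
              Jhat i (Function.update astar i b) + ΔJ i (Function.update astar i b)) := by
  intro ε hε
  -- pick the minimizing player j
  obtain ⟨j, -, hj⟩ := Finset.exists_mem_eq_inf' (Finset.univ_nonempty (α := N))
    (fun i => (Finset.univ.filter (fun b : A i => b ≠ astar i)).inf'
        (by
          obtain ⟨b, hb⟩ := Fintype.exists_ne_of_one_lt_card (hcard i) (astar i)
          exact ⟨b, Finset.mem_filter.mpr ⟨Finset.mem_univ b, hb⟩⟩)
        (fun b => Jhat i (Function.update astar i b) - Jhat i astar))
  obtain ⟨b, hbmem, hb⟩ := Finset.exists_mem_eq_inf'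
    (s := Finset.univ.filter (fun b : A j => b ≠ astar j))
    (by
      obtain ⟨b, hb⟩ := Fintype.exists_ne_of_one_lt_card (hcard j) (astar j)
      exact ⟨b, Finset.mem_filter.mpr ⟨Finset.mem_univ b, hb⟩⟩)
    (fun b => Jhat j (Function.update astar j b) - Jhat j astar)
  have hbne : b ≠ astar j := (Finset.mem_filter.mp hbmem).2
  have hμval : μ = (1 / 2) * (Jhat j (Function.update astar j b) - Jhat j astar) := by
    rw [hμ, hj, hb]
  -- μ ≥ 0
  have hμ0 : 0 ≤ μ := by
    have := hNE j b
    rw [hμval]; linarith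
  have hμε : 0 < μ + ε := by linarith
  set bprof := Function.update astar j b with hbprof
  have hne : astar ≠ bprof := by
    intro h
    apply hbne
    have := congrFun h j
    rw [hbprof, Function.update_self] at this
    exact this.symm
  refine ⟨fun i a => if i = j then (if a = astar then μ + ε else
      if a = bprof then -(μ + ε) else 0) else 0, ?_, ?_⟩
  · apply le_antisymm
    · apply Finset.sup'_le
      intro i _
      apply Finset.sup'_le
      intro a _
      dsimp only
      rcases eq_or_ne i j with h1 | h1
      · subst h1
        rcases eq_or_ne a astar with h2 | h2
        · simp [h2, abs_of_pos hμε]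
        · rcases eq_or_ne a bprof with h3 | h3
          · rw [if_pos rfl, if_neg h2, if_pos h3, abs_neg, abs_of_pos hμε]
          · simp [h2, h3]
            linarith
      · simp [h1]
        linarith
    · refine le_trans ?_ (Finset.le_sup' _ (Finset.mem_univ j))
      refine le_trans ?_ (Finset.le_sup' _ (Finset.mem_univ astar))
      simp [abs_of_pos hμε]
  · intro hcon
    have H := hcon j b
    simp only [← hbprof] at H
    simp [Ne.symm hne] at H
    rw [hμval] at H
    linarith
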